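/- Let n ≥ 1 and let x : Fin (n+1) → EuclideanSpace ℝ (Fin n) be a non-degenerate configuration. For each i : Fin (n+1), let S i := affineSpan ℝ (x '' {j | j ≠ i}). Then for every proper subset V' of Fin (n+1) (i.e. V' ≠ Set.univ), affineSpan ℝ (x '' V'ᶜ) = ⨅ i ∈ V', S i (the infimum taken in the lattice of affine subspaces of EuclideanSpace ℝ (Fin n)). -/

import Mathlib

theorem affineSpan_compl_eq_iInf_hyperplanes {n : ℕ} (hn : 1 ≤ n)
    (x : Fin (n + 1) → EuclideanSpace ℝ (Fin n))
    (hx : affineSpan ℝ (Set.range x) = ⊤)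
    (V' : Set (Fin (n + 1))) (hV' : V' ≠ Set.univ) :
    affineSpan ℝ (x '' V'ᶜ) = ⨅ i ∈ V', affineSpan ℝ (x '' {j | j ≠ i}) := by
  classical
  have ha : AffineIndependent ℝ x := by
    rw [affineIndependent_iff_le_finrank_vectorSpan ℝ x (Fintype.card_fin (n + 1))]
    rw [← direction_affineSpan, hx, AffineSubspace.direction_top]
    simp [finrank_euclideanSpace_fin]
  let b : AffineBasis (Fin (n + 1)) ℝ (EuclideanSpace ℝ (Fin n)) := ⟨x, ha, hx⟩
  apply le_antisymm
  · refine le_iInf₂ fun i hi => affineSpan_mono ℝ (Set.image_mono (f := x) ?_)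
    intro j hj
    exact fun h => hj (h ▸ hi)
  · rw [SetLike.le_def]
    intro q hq
    -- coordinates of q vanish on V'
    have hcoord : ∀ i ∈ V', b.coord i q = 0 := by
      intro i hi
      have hq' : q ∈ affineSpan ℝ (x '' {j | j ≠ i}) :=
        (iInf₂_le i hi : _ ≤ affineSpan ℝ (x '' {j | j ≠ i})) hq
      rw [Set.image_eq_range, mem_affineSpan_iff_eq_affineCombination,
        ← Finset.eq_affineCombination_subset_iff_eq_affineCombination_subtype] at hq'
      obtain ⟨fs, hfs, w, hw, rfl⟩ := hq'
      exact b.coord_apply_combination_of_notMem (fun h => (hfs h) rfl) hw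
    set w0 : Fin (n + 1) → ℝ := fun i => b.coord i q with hw0
    have hqc : q = Finset.univ.affineCombination ℝ x w0 :=
      (b.affineCombination_coord_eq_self q).symm
    set fs : Finset (Fin (n + 1)) := V'ᶜ.toFinset with hfs
    have hzero : ∀ i ∈ Finset.univ, i ∉ fs → w0 i = 0 := by
      intro i _ hi
      apply hcoord
      simpa [hfs, Set.mem_toFinset] using hi
    have hind : Set.indicator (↑fs) w0 = w0 := by
      funext i
      by_cases h : i ∈ (fs : Set (Fin (n + 1)))
      · simp [Set.indicator_of_mem h]
      · rw [Set.indicator_of_notMem h, hzero i (Finset.mem_univ i) h]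
    have hsum : ∑ i ∈ fs, w0 i = 1 := by
      rw [Finset.sum_subset (Finset.subset_univ fs) hzero]
      exact b.sum_coord_apply_eq_one q
    have hcomb : q = fs.affineCombination ℝ x w0 := by
      rw [hqc]
      have := Finset.affineCombination_indicator_subset w0 x (Finset.subset_univ fs)
      rw [hind] at this
      exact this.symm
    rw [Set.image_eq_range, mem_affineSpan_iff_eq_affineCombination,
      ← Finset.eq_affineCombination_subset_iff_eq_affineCombination_subtype]
    exact ⟨fs, by simp [hfs], w0, hsum, hcomb⟩
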